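/- Let T be an optimal irreducible 2WCST whose root is a less-than test ⟨< r⟩, whose ≥-branch subtree T₂ is rooted at a test node on a key i with =/≥-branch subtree T₃ and ≠/<-branch subtree T₄. If w(T₃) < (1/3)·w(T₂), then T₄ cannot have exactly two leaves. -/

import Mathlib

/-- Binary search trees with two-way comparisons (2WCST):
leaves are labelled by keys, internal nodes are equal-to tests `eqNode k yes no`
or less-than tests `ltNode k yes no` (yes-branch taken when `q = k`, resp. `q < k`). -/
inductive CTree where
  | leaf : ℕ → CTree
  | eqNode : ℕ → CTree → CTree → CTree
  | ltNode : ℕ → CTree → CTree → CTree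
deriving DecidableEq

namespace CTree

/-- The key labelling the leaf reached by query `q`. -/
def search : CTree → ℕ → ℕ
  | leaf k, _ => k
  | eqNode k y nb, q => if q = k then y.search q else nb.search q
  | ltNode k y nb, q => if q < k then y.search q else nb.search q

/-- The depth of the leaf reached by query `q`. -/
def searchDepth : CTree → ℕ → ℕ
  | leaf _, _ => 0
  | eqNode k y nb, q => (if q = k then y.searchDepth q else nb.searchDepth q) + 1
  | ltNode k y nb, q => (if q < k then y.searchDepth q else nb.searchDepth q) + 1

/-- All keys appearing in the tree (leaf labels and test keys). -/
def keys : CTree → Finset ℕ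
  | leaf k => {k}
  | eqNode k y nb => insert k (y.keys ∪ nb.keys)
  | ltNode k y nb => insert k (y.keys ∪ nb.keys)

/-- `T` is a valid 2WCST for the instance with key set `K = {1, …, n}`:
all keys used belong to `K` and every query `q ∈ K` reaches a leaf labelled `q`. -/
def ValidFor (n : ℕ) (T : CTree) : Prop :=
  T.keys ⊆ Finset.Icc 1 n ∧ ∀ q ∈ Finset.Icc 1 n, T.search q = q

/-- The cost of `T`: `∑_{k ∈ K} w_k · depth_T(k)`. -/
noncomputable def cost (w : ℕ → ℝ) (n : ℕ) (T : CTree) : ℝ :=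
  ∑ k ∈ Finset.Icc 1 n, w k * T.searchDepth k

/-- `T` is an optimal 2WCST for the instance. -/
noncomputable def OptimalFor (w : ℕ → ℝ) (n : ℕ) (T : CTree) : Prop :=
  ValidFor n T ∧ ∀ T' : CTree, ValidFor n T' → cost w n T ≤ cost w n T'

/-- `w(S)`: total weight of the keys labelling the leaves of a subtree. -/
noncomputable def wt (w : ℕ → ℝ) : CTree → ℝ
  | leaf k => w k
  | eqNode _ y nb => wt w y + wt w nb
  | ltNode _ y nb => wt w y + wt w nb

/-- The side-weight of a node. -/
noncomputable def sw (w : ℕ → ℝ) : CTree → ℝ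
  | leaf _ => 0
  | eqNode k _ _ => w k
  | ltNode _ y nb => min (wt w y) (wt w nb)

/-- `Occurs s T`: `s` occurs as a subtree (node) of `T`. -/
inductive Occurs : CTree → CTree → Prop
  | refl (t : CTree) : Occurs t t
  | eqYes {s k y nb} : Occurs s y → Occurs s (eqNode k y nb)
  | eqNo {s k y nb} : Occurs s nb → Occurs s (eqNode k y nb)
  | ltYes {s k y nb} : Occurs s y → Occurs s (ltNode k y nb)
  | ltNo {s k y nb} : Occurs s nb → Occurs s (ltNode k y nb)

/-- `v` is a child of node `u`. -/
def IsChildOf (v u : CTree) : Prop :=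
  match u with
  | leaf _ => False
  | eqNode _ y nb => v = y ∨ v = nb
  | ltNode _ y nb => v = y ∨ v = nb

/-- The root of the tree is an equal-to test. -/
def RootEq : CTree → Prop
  | eqNode _ _ _ => True
  | _ => False

/-- `ReplaceAt s t T T'`: `T'` is obtained from `T` by replacing one
occurrence of the subtree `s` by `t`, leaving the rest of `T` unchanged. -/
inductive ReplaceAt (s t : CTree) : CTree → CTree → Prop
  | here : ReplaceAt s t s t
  | eqYes {k y y' nb} : ReplaceAt s t y y' → ReplaceAt s t (eqNode k y nb) (eqNode k y' nb)
  | eqNo {k y nb nb'} : ReplaceAt s t nb nb' → ReplaceAt s t (eqNode k y nb) (eqNode k y nb')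
  | ltYes {k y y' nb} : ReplaceAt s t y y' → ReplaceAt s t (ltNode k y nb) (ltNode k y' nb)
  | ltNo {k y nb nb'} : ReplaceAt s t nb nb' → ReplaceAt s t (ltNode k y nb) (ltNode k y nb')

/-- Irreducibility relative to the set `Q` of queries that reach the current subtree:
every branch of every node is traversed by some query. -/
def IrredFrom : Finset ℕ → CTree → Prop
  | _, leaf _ => True
  | Q, eqNode k y nb =>
      (Q.filter (· = k)).Nonempty ∧ (Q.filter (· ≠ k)).Nonempty ∧
      IrredFrom (Q.filter (· = k)) y ∧ IrredFrom (Q.filter (· ≠ k)) nb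
  | Q, ltNode k y nb =>
      (Q.filter (· < k)).Nonempty ∧ (Q.filter (fun q => ¬ q < k)).Nonempty ∧
      IrredFrom (Q.filter (· < k)) y ∧ IrredFrom (Q.filter (fun q => ¬ q < k)) nb

/-- `T` is irreducible: no branch is redundant for the query set `{1, …, n}`. -/
def Irred (n : ℕ) (T : CTree) : Prop := IrredFrom (Finset.Icc 1 n) T

/-- The two kinds of comparison tests. -/
inductive TestKind where
  | eq : TestKind
  | lt : TestKind
deriving DecidableEq

/-- A test node `⟨? k⟩` on key `k` with `=/≥`-branch `hi` and `≠/<`-branch `lo`. -/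
def mkTest : TestKind → ℕ → CTree → CTree → CTree
  | .eq, k, hi, lo => eqNode k hi lo
  | .lt, k, hi, lo => ltNode k lo hi

/-- The `=/≥`-outcome of a test of kind `t` on key `b`, applied to query `q`. -/
def hiOutcome : TestKind → ℕ → ℕ → Prop
  | .eq, b, q => q = b
  | .lt, b, q => b ≤ q

instance (t : TestKind) (b q : ℕ) : Decidable (hiOutcome t b q) :=
  match t with
  | .eq => inferInstanceAs (Decidable (q = b))
  | .lt => inferInstanceAs (Decidable (b ≤ q))

/-- Number of leaves of a tree. -/
def numLeaves : CTree → ℕ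
  | leaf _ => 1
  | eqNode _ y nb => y.numLeaves + nb.numLeaves
  | ltNode _ y nb => y.numLeaves + nb.numLeaves

end CTree


namespace CTree

lemma mkTest_search (t : TestKind) (k : ℕ) (hi lo : CTree) (q : ℕ) :
    (mkTest t k hi lo).search q = if hiOutcome t k q then hi.search q else lo.search q := by
  cases t with
  | eq => simp [mkTest, search, hiOutcome]; rfl
  | lt =>
    simp only [mkTest, search, hiOutcome]
    by_cases h : q < k
    · simp [h, not_le.2 h]
    · simp [h, le_of_not_gt h]

lemma mkTest_searchDepth (t : TestKind) (k : ℕ) (hi lo : CTree) (q : ℕ) :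
    (mkTest t k hi lo).searchDepth q
      = (if hiOutcome t k q then hi.searchDepth q else lo.searchDepth q) + 1 := by
  cases t with
  | eq => simp [mkTest, searchDepth, hiOutcome]; rfl
  | lt =>
    simp only [mkTest, searchDepth, hiOutcome]
    by_cases h : q < k
    · simp [h, not_le.2 h]
    · simp [h, le_of_not_gt h]

lemma mkTest_keys (t : TestKind) (k : ℕ) (hi lo : CTree) :
    (mkTest t k hi lo).keys = insert k (hi.keys ∪ lo.keys) := by
  cases t <;> simp [mkTest, keys, Finset.union_comm]

lemma mkTest_wt (w : ℕ → ℝ) (t : TestKind) (k : ℕ) (hi lo : CTree) :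
    wt w (mkTest t k hi lo) = wt w hi + wt w lo := by
  cases t <;> simp [mkTest, wt] <;> ring

lemma sum_le_wt (w : ℕ → ℝ) (T : CTree) (S : Finset ℕ)
    (hs : ∀ q ∈ S, T.search q = q) (hnn : ∀ k ∈ T.keys, 0 ≤ w k) :
    ∑ q ∈ S, w q ≤ wt w T := by
  induction T generalizing S with
  | leaf k =>
    have hS : S ⊆ {k} := by
      intro q hq
      have := hs q hq
      simp only [search] at this
      simp [← this]
    calc ∑ q ∈ S, w q ≤ ∑ q ∈ ({k} : Finset ℕ), w q := by
          refine Finset.sum_le_sum_of_subset_of_nonneg hS ?_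
          intro j hj _
          have : j = k := by simpa using hj
          exact this ▸ hnn k (by simp [keys])
      _ = w k := by simp
      _ = wt w (leaf k) := rfl
  | eqNode k y nb ihy ihnb =>
    rw [← Finset.sum_filter_add_sum_filter_not S (· = k)]
    have h1 := ihy (S.filter (· = k)) (by
      intro q hq
      simp only [Finset.mem_filter] at hq
      have := hs q hq.1
      simpa [search, hq.2] using this)
      (fun j hj => hnn j (by simp [keys]; tauto))
    have h2 := ihnb (S.filter (¬ · = k)) (by
      intro q hq
      simp only [Finset.mem_filter] at hq
      have := hs q hq.1
      simpa [search, hq.2] using this)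
      (fun j hj => hnn j (by simp [keys]; tauto))
    calc _ ≤ wt w y + wt w nb := add_le_add h1 h2
      _ = wt w (eqNode k y nb) := rfl
  | ltNode k y nb ihy ihnb =>
    rw [← Finset.sum_filter_add_sum_filter_not S (· < k)]
    have h1 := ihy (S.filter (· < k)) (by
      intro q hq
      simp only [Finset.mem_filter] at hq
      have := hs q hq.1
      simpa [search, hq.2] using this)
      (fun j hj => hnn j (by simp [keys]; tauto))
    have h2 := ihnb (S.filter (¬ · < k)) (by
      intro q hq
      simp only [Finset.mem_filter] at hq
      have := hs q hq.1
      simpa [search, hq.2] using this)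
      (fun j hj => hnn j (by simp [keys]; tauto))
    calc _ ≤ wt w y + wt w nb := add_le_add h1 h2
      _ = wt w (ltNode k y nb) := rfl

lemma one_le_numLeaves (T : CTree) : 1 ≤ T.numLeaves := by
  induction T <;> simp [numLeaves] <;> omega

lemma eq_leaf_of_numLeaves_eq_one {T : CTree} (h : T.numLeaves = 1) : ∃ k, T = leaf k := by
  cases T with
  | leaf k => exact ⟨k, rfl⟩
  | eqNode k y nb =>
    have := one_le_numLeaves y; have := one_le_numLeaves nb
    simp only [numLeaves] at h; omega
  | ltNode k y nb =>
    have := one_le_numLeaves y; have := one_le_numLeaves nb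
    simp only [numLeaves] at h; omega

/-- Exchange argument: a leaf of `T₄` weighs no more than `wt T₃`. -/
lemma leaf_bound
    (n : ℕ) (w : ℕ → ℝ) (hw : ∀ q ∈ Finset.Icc 1 n, 0 ≤ w q)
    (r i : ℕ) (t : TestKind) (L T3 T4 : CTree)
    (hopt : OptimalFor w n (CTree.ltNode r L (mkTest t i T3 T4)))
    (x y : ℕ)
    (hT4s : ∀ q, T4.search q = x ∨ T4.search q = y)
    (hT4d : ∀ q, T4.searchDepth q = 1)
    (hxI : x ∈ Finset.Icc 1 n) (hyI : y ∈ Finset.Icc 1 n)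
    (hxr : ¬ x < r) (hxhi : ¬ hiOutcome t i x) :
    w x ≤ wt w T3 := by
  classical
  obtain ⟨⟨hkeys, hsearch⟩, hopt2⟩ := hopt
  set T : CTree := CTree.ltNode r L (mkTest t i T3 T4) with hT
  set T' : CTree := CTree.ltNode r L (eqNode x (leaf x) (mkTest t i T3 (leaf y))) with hT'
  have h3k : ∀ k ∈ T3.keys, k ∈ Finset.Icc 1 n := by
    intro k hk; exact hkeys (by simp [hT, keys, mkTest_keys]; tauto)
  -- validity of T'
  have hkT' : T'.keys ⊆ Finset.Icc 1 n := by
    intro k hk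
    simp only [hT', keys, mkTest_keys, Finset.mem_insert, Finset.mem_union,
      Finset.mem_singleton] at hk
    rcases hk with rfl | hk | rfl | rfl | rfl | hk | rfl
    · exact hkeys (by simp [hT, keys])
    · exact hkeys (by simp [hT, keys, hk])
    · exact hxI
    · exact hxI
    · exact hkeys (by simp [hT, keys, mkTest_keys])
    · exact h3k k hk
    · exact hyI
  have hsT' : ∀ q ∈ Finset.Icc 1 n, T'.search q = q := by
    intro q hq
    have horig := hsearch q hq
    by_cases hqr : q < r
    · simp only [hT, search, if_pos hqr] at horig
      simp [hT', search, hqr, horig]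
    · by_cases hqx : q = x
      · subst hqx; simp [hT', search, hqr]
      · simp only [hT, search, if_neg hqr, mkTest_search] at horig
        simp only [hT', search, if_neg hqr, if_neg hqx, mkTest_search]
        by_cases hhi : hiOutcome t i q
        · simpa [hhi] using horig
        · simp only [if_neg hhi] at horig ⊢
          rcases hT4s q with h | h
          · exact absurd (h.symm.trans horig).symm hqx
          · exact h.symm.trans horig
  -- depths
  have hdT : ∀ q, ¬ q < r →
      T.searchDepth q = (if hiOutcome t i q then T3.searchDepth q else 1) + 2 := by
    intro q h
    simp only [hT, searchDepth, if_neg h, mkTest_searchDepth, hT4d]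
  have hdT' : ∀ q, ¬ q < r →
      T'.searchDepth q = if q = x then 2
        else (if hiOutcome t i q then T3.searchDepth q else 0) + 3 := by
    intro q h
    by_cases hqx : q = x
    · subst hqx; simp [hT', searchDepth, h]
    · simp only [hT', searchDepth, if_neg h, if_neg hqx, mkTest_searchDepth]
  set S : Finset ℕ :=
    (Finset.Icc 1 n).filter (fun q => ¬ q < r ∧ q ≠ x ∧ hiOutcome t i q) with hSdef
  have key : ∀ q ∈ Finset.Icc 1 n,
      w q * (T'.searchDepth q : ℝ)
        = w q * (T.searchDepth q : ℝ)
          + (if ¬ q < r ∧ q ≠ x ∧ hiOutcome t i q then w q else 0)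
          - (if q = x then w q else 0) := by
    intro q _
    by_cases hqr : q < r
    · have hqx : q ≠ x := fun h => hxr (h ▸ hqr)
      simp [hT, hT', search, searchDepth, hqr, hqx]
    · rw [hdT q hqr, hdT' q hqr]
      by_cases hqx : q = x
      · rw [if_pos hqx, if_pos hqx, if_neg (fun hh => hxhi (hqx ▸ hh)),
          if_neg (show ¬(¬q < r ∧ q ≠ x ∧ hiOutcome t i q) from fun h => h.2.1 hqx)]
        push_cast; ring
      · by_cases hhi : hiOutcome t i q
        · rw [if_neg hqx, if_neg hqx, if_pos hhi, if_pos hhi,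
            if_pos (show ¬q < r ∧ q ≠ x ∧ hiOutcome t i q from ⟨hqr, hqx, hhi⟩)]
          push_cast; ring
        · rw [if_neg hqx, if_neg hqx, if_neg hhi, if_neg hhi,
            if_neg (show ¬(¬q < r ∧ q ≠ x ∧ hiOutcome t i q) from fun h => hhi h.2.2)]
          push_cast; ring
  have hsum : cost w n T' = cost w n T + (∑ q ∈ S, w q) - w x := by
    unfold cost
    rw [Finset.sum_congr rfl key, Finset.sum_sub_distrib, Finset.sum_add_distrib]
    congr 1
    · congr 1
      rw [hSdef, Finset.sum_filter]
    · rw [Finset.sum_ite_eq' (Finset.Icc 1 n) x w, if_pos hxI]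
  have hc : cost w n T ≤ cost w n T' := hopt2 T' ⟨hkT', hsT'⟩
  have hS : ∑ q ∈ S, w q ≤ wt w T3 := by
    refine sum_le_wt w T3 S ?_ (fun k hk => hw k (h3k k hk))
    intro q hq
    simp only [hSdef, Finset.mem_filter] at hq
    obtain ⟨hqI, hqr, hqx, hhi⟩ := hq
    have := hsearch q hqI
    simpa [hT, search, hqr, mkTest_search, hhi] using this
  linarith

lemma irr_extract (n r i : ℕ) (t : TestKind) (L T3 T4 : CTree)
    (hirr : Irred n (CTree.ltNode r L (mkTest t i T3 T4))) :
    ∃ Q4 : Finset ℕ,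
      (∀ q ∈ Q4, q ∈ Finset.Icc 1 n ∧ ¬ q < r ∧ ¬ hiOutcome t i q) ∧ IrredFrom Q4 T4 := by
  obtain ⟨-, -, -, h2⟩ := hirr
  cases t with
  | eq =>
    obtain ⟨-, -, -, h4⟩ := h2
    refine ⟨_, ?_, h4⟩
    intro q hq
    simp only [Finset.mem_filter] at hq
    exact ⟨hq.1.1, hq.1.2, hq.2⟩
  | lt =>
    obtain ⟨-, -, h4, -⟩ := h2
    refine ⟨_, ?_, h4⟩
    intro q hq
    simp only [Finset.mem_filter] at hq
    exact ⟨hq.1.1, hq.1.2, not_le.mpr hq.2⟩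

lemma irr_leaf (Q : Finset ℕ) (t' : TestKind) (c x y : ℕ)
    (h : IrredFrom Q (mkTest t' c (leaf x) (leaf y))) :
    (∃ q ∈ Q, (mkTest t' c (leaf x) (leaf y)).search q = x) ∧
    (∃ q ∈ Q, (mkTest t' c (leaf x) (leaf y)).search q = y) := by
  cases t' with
  | eq =>
    obtain ⟨⟨q1, hq1⟩, ⟨q2, hq2⟩, -, -⟩ := h
    simp only [Finset.mem_filter] at hq1 hq2
    exact ⟨⟨q1, hq1.1, by simp [mkTest, search, hq1.2]⟩,
           ⟨q2, hq2.1, by simp [mkTest, search, hq2.2]⟩⟩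
  | lt =>
    obtain ⟨⟨q1, hq1⟩, ⟨q2, hq2⟩, -, -⟩ := h
    simp only [Finset.mem_filter] at hq1 hq2
    exact ⟨⟨q2, hq2.1, by simp [mkTest, search, hq2.2]⟩,
           ⟨q1, hq1.1, by simp [mkTest, search, hq1.2]⟩⟩

end CTree

open CTree in
/-- In an optimal irreducible 2WCST with root `⟨< r⟩` whose ≥-branch is
`T₂ = ⟨? i⟩(T₃, T₄)`, if `w(T₃) < (1/3)·w(T₂)` then `T₄` cannot have exactly
two leaves. -/
theorem T4_not_two_leaves
    (n : ℕ) (w : ℕ → ℝ) (hw : ∀ q ∈ Finset.Icc 1 n, 0 ≤ w q)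
    (r i : ℕ) (t : TestKind) (L T3 T4 : CTree)
    (hopt : OptimalFor w n (CTree.ltNode r L (mkTest t i T3 T4)))
    (hirr : Irred n (CTree.ltNode r L (mkTest t i T3 T4)))
    (hT3 : wt w T3 < (1 / 3 : ℝ) * wt w (mkTest t i T3 T4)) :
    numLeaves T4 ≠ 2 := by
  intro h2
  obtain ⟨t', c, x, y, rfl⟩ :
      ∃ t' c x y, T4 = mkTest t' c (CTree.leaf x) (CTree.leaf y) := by
    cases T4 with
    | leaf k => simp [numLeaves] at h2
    | eqNode c u v =>
      have hu := one_le_numLeaves u; have hv := one_le_numLeaves v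
      simp only [numLeaves] at h2
      obtain ⟨a, rfl⟩ := eq_leaf_of_numLeaves_eq_one (show u.numLeaves = 1 by omega)
      obtain ⟨b, rfl⟩ := eq_leaf_of_numLeaves_eq_one (show v.numLeaves = 1 by omega)
      exact ⟨.eq, c, a, b, rfl⟩
    | ltNode c u v =>
      have hu := one_le_numLeaves u; have hv := one_le_numLeaves v
      simp only [numLeaves] at h2
      obtain ⟨a, rfl⟩ := eq_leaf_of_numLeaves_eq_one (show u.numLeaves = 1 by omega)
      obtain ⟨b, rfl⟩ := eq_leaf_of_numLeaves_eq_one (show v.numLeaves = 1 by omega)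
      exact ⟨.lt, c, b, a, rfl⟩
  set g : CTree := mkTest t' c (CTree.leaf x) (CTree.leaf y) with hg
  have hT4s : ∀ q, g.search q = x ∨ g.search q = y := by
    intro q
    rw [hg, mkTest_search]
    by_cases h : hiOutcome t' c q
    · left; simp [h, search]
    · right; simp [h, search]
  have hT4d : ∀ q, g.searchDepth q = 1 := by
    intro q
    rw [hg, mkTest_searchDepth]
    by_cases h : hiOutcome t' c q <;> simp [h, searchDepth]
  have hwt4 : wt w g = w x + w y := by
    rw [hg, mkTest_wt]; simp [wt]
  obtain ⟨Q4, hQ4, hirr4⟩ := irr_extract n r i t L T3 g hirr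
  obtain ⟨⟨qx, hqxQ, hqxs⟩, ⟨qy, hqyQ, hqys⟩⟩ := irr_leaf Q4 t' c x y (hg ▸ hirr4)
  have hval := hopt.1
  have hqx' := hQ4 qx hqxQ
  have hqy' := hQ4 qy hqyQ
  have hxq : qx = x := by
    have h0 := hval.2 qx hqx'.1
    simp only [search, if_neg hqx'.2.1, mkTest_search, if_neg hqx'.2.2] at h0
    exact h0.symm.trans hqxs
  have hyq : qy = y := by
    have h0 := hval.2 qy hqy'.1
    simp only [search, if_neg hqy'.2.1, mkTest_search, if_neg hqy'.2.2] at h0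
    exact h0.symm.trans hqys
  have hxI : x ∈ Finset.Icc 1 n := hxq ▸ hqx'.1
  have hxr : ¬ x < r := hxq ▸ hqx'.2.1
  have hxhi : ¬ hiOutcome t i x := hxq ▸ hqx'.2.2
  have hyI : y ∈ Finset.Icc 1 n := hyq ▸ hqy'.1
  have hyr : ¬ y < r := hyq ▸ hqy'.2.1
  have hyhi : ¬ hiOutcome t i y := hyq ▸ hqy'.2.2
  have hbx := leaf_bound n w hw r i t L T3 g hopt x y hT4s hT4d hxI hyI hxr hxhi
  have hby := leaf_bound n w hw r i t L T3 g hopt y x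
    (fun q => (hT4s q).symm) hT4d hyI hxI hyr hyhi
  rw [mkTest_wt, hwt4] at hT3
  linarith
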